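/- First-order scaled delta expansion solution at n = 1: define for 0 < z < π the function Θ₁⁽¹⁾(z) = (sin z / z)·[1 − ln(2π)/2 − Si(2π)/(4π) − Cin(2z)/4 + (ln z)/2 − (1/2)·ln(sin z)] + (cos z / z)·[(z/2)·ln(2π) − (z/2)·ln z + z·Si(2π)/(4π) − Si(2z)/4 + (1/2)·∫₀^z ln(sin t) dt], where Si(x) = ∫₀^x (sin t)/t dt and Cin(x) = ∫₀^x (1 − cos t)/t dt. Then Θ₁⁽¹⁾ satisfies Θ₁⁽¹⁾''(z) + (2/z)·Θ₁⁽¹⁾'(z) + Θ₁⁽¹⁾(z) = −(sin z / z)·[ln S₁⁽⁰⁾ + ln(sin z / z)] for all 0 < z < π, where S₁⁽⁰⁾ = 2π·exp(Si(2π)/(2π) − 3/2); moreover Θ₁⁽¹⁾(z) → 0 and Θ₁⁽¹⁾'(z) → 0 as z → 0⁺, and Θ₁⁽¹⁾(z) → 0 as z → π⁻. -/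

import Mathlib

open Real MeasureTheory intervalIntegral Filter Set Topology

noncomputable def sdeSinc (x : ℝ) : ℝ := if x = 0 then 1 else Real.sin x / x

lemma sdeSinc_of_ne (x : ℝ) (hx : x ≠ 0) : sdeSinc x = Real.sin x / x := if_neg hx

lemma continuousAt_zero_aux (f : ℝ → ℝ) (v : ℝ) (hf : Filter.Tendsto f (nhdsWithin 0 {(0:ℝ)}ᶜ) (nhds v))
    (hv : f 0 = v) : ContinuousAt f 0 := by
  unfold ContinuousAt
  rw [hv, ← nhdsNE_sup_pure (0:ℝ), Filter.tendsto_sup]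
  exact ⟨hf, by simpa [hv] using tendsto_pure_nhds f 0⟩

lemma continuous_sdeSinc : Continuous sdeSinc := by
  rw [continuous_iff_continuousAt]
  intro x
  rcases eq_or_ne x 0 with rfl | hx
  · apply continuousAt_zero_aux _ 1 _ (by simp [sdeSinc])
    have h1 : Filter.Tendsto (fun t : ℝ => Real.sin t / t) (nhdsWithin 0 {(0:ℝ)}ᶜ) (nhds 1) := by
      have := (Real.hasDerivAt_sin 0)
      rw [hasDerivAt_iff_tendsto_slope] at this
      refine (by simpa [Real.cos_zero] using this : Filter.Tendsto (slope Real.sin 0) (nhdsWithin 0 {(0:ℝ)}ᶜ) (nhds 1)).congr ?_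
      intro t; simp [slope_def_field]
    refine h1.congr' ?_
    filter_upwards [self_mem_nhdsWithin] with t ht
    exact (sdeSinc_of_ne t ht).symm
  · have : ContinuousAt (fun t : ℝ => Real.sin t / t) x :=
      (Real.continuous_sin.continuousAt).div continuousAt_id hx
    apply this.congr
    filter_upwards [isOpen_compl_singleton.mem_nhds hx] with t ht
    exact (sdeSinc_of_ne t ht).symm

lemma continuous_cinc : Continuous (fun x : ℝ => (1 - Real.cos x) / x) := by
  rw [continuous_iff_continuousAt]
  intro x
  rcases eq_or_ne x 0 with rfl | hx
  · apply continuousAt_zero_aux _ 0 _ (by simp)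
    have h1 : HasDerivAt (fun t : ℝ => 1 - Real.cos t) 0 0 := by
      simpa using ((Real.hasDerivAt_cos 0).const_sub 1)
    rw [hasDerivAt_iff_tendsto_slope] at h1
    refine (by simpa using h1 : Filter.Tendsto (slope (fun t : ℝ => 1 - Real.cos t) 0) (nhdsWithin 0 {(0:ℝ)}ᶜ) (nhds 0)).congr ?_
    intro t; simp [slope_def_field]
  · exact ((continuous_const.sub Real.continuous_cos).continuousAt).div continuousAt_id hx

lemma si_eq : (fun x : ℝ => ∫ t in (0:ℝ)..x, Real.sin t / t) = fun x => ∫ t in (0:ℝ)..x, sdeSinc t := by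
  funext x
  apply intervalIntegral.integral_congr_ae
  have h0 : ∀ᵐ t : ℝ, t ≠ 0 := by
    filter_upwards [compl_mem_ae_iff.2 (volume_singleton (a := (0:ℝ)))] with t ht
    simpa using ht
  filter_upwards [h0] with t ht _
  exact (sdeSinc_of_ne t ht).symm

lemma hasDerivAt_Si (x : ℝ) :
    HasDerivAt (fun x : ℝ => ∫ t in (0:ℝ)..x, Real.sin t / t) (sdeSinc x) x := by
  rw [si_eq]
  exact intervalIntegral.integral_hasDerivAt_right
    (continuous_sdeSinc.intervalIntegrable _ _)
    (continuous_sdeSinc.stronglyMeasurable.stronglyMeasurableAtFilter)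
    continuous_sdeSinc.continuousAt

lemma hasDerivAt_Cin (x : ℝ) :
    HasDerivAt (fun x : ℝ => ∫ t in (0:ℝ)..x, (1 - Real.cos t) / t) ((1 - Real.cos x) / x) x :=
  intervalIntegral.integral_hasDerivAt_right
    (continuous_cinc.intervalIntegrable _ _)
    (continuous_cinc.stronglyMeasurable.stronglyMeasurableAtFilter)
    continuous_cinc.continuousAt


lemma intervalIntegrable_log0 {b : ℝ} (hb : 0 ≤ b) : IntervalIntegrable Real.log volume 0 b := by
  have base : IntervalIntegrable Real.log volume 0 1 := by
    have h : IntervalIntegrable (fun x : ℝ => -Real.log x) volume 0 1 := by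
      apply intervalIntegrable_deriv_of_nonneg (g := fun t : ℝ => t - t * Real.log t)
      · exact (continuous_id.sub Real.continuous_mul_log).continuousOn
      · intro x hx
        simp only [min_def, max_def] at hx
        norm_num at hx
        have hx0 : x ≠ 0 := ne_of_gt hx.1
        have h1 : HasDerivAt (fun t : ℝ => t - t * Real.log t) (1 - (1 * Real.log x + x * x⁻¹)) x :=
          (hasDerivAt_id x).sub ((hasDerivAt_id x).mul (Real.hasDerivAt_log hx0))
        convert h1 using 1
        field_simp; ring
      · intro x hx
        simp only [min_def, max_def] at hx
        norm_num at hx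
        simp only [neg_nonneg]
        exact Real.log_nonpos hx.1.le hx.2.le
    rw [show Real.log = -(fun x : ℝ => -Real.log x) from by funext x; simp]
    exact h.neg
  rcases le_total b 1 with hb1 | hb1
  · exact base.mono_set (by rw [uIcc_of_le hb, uIcc_of_le zero_le_one]; exact Icc_subset_Icc le_rfl hb1)
  · refine base.trans ?_
    apply ContinuousOn.intervalIntegrable
    apply Real.continuousOn_log.mono
    intro x hx
    rw [uIcc_of_le hb1] at hx
    simp only [mem_compl_iff, mem_singleton_iff]
    nlinarith [hx.1]

lemma integral_log0 {b : ℝ} (hb : 0 < b) :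
    ∫ t in (0:ℝ)..b, Real.log t = b * Real.log b - b := by
  have := intervalIntegral.integral_eq_sub_of_hasDeriv_right_of_le hb.le
    (f := fun t : ℝ => t * Real.log t - t) (f' := Real.log)
    ((Real.continuous_mul_log.sub continuous_id).continuousOn)
    (fun x hx => by
      have hx0 : x ≠ 0 := ne_of_gt hx.1
      have h1 : HasDerivAt (fun t : ℝ => t * Real.log t - t) (1 * Real.log x + x * x⁻¹ - 1) x :=
        ((hasDerivAt_id x).mul (Real.hasDerivAt_log hx0)).sub (hasDerivAt_id x)
      have : HasDerivAt (fun t : ℝ => t * Real.log t - t) (Real.log x) x := by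
        convert h1 using 1; field_simp; ring
      exact this.hasDerivWithinAt)
    (intervalIntegrable_log0 hb.le)
  simpa using this

lemma sdeSinc_pos {t : ℝ} (h0 : 0 ≤ t) (hπ : t < π) : 0 < sdeSinc t := by
  rcases eq_or_lt_of_le h0 with rfl | h0
  · simp [sdeSinc]
  · rw [sdeSinc_of_ne t (ne_of_gt h0)]
    exact div_pos (Real.sin_pos_of_pos_of_lt_pi h0 hπ) h0

lemma log_sin_eq {t : ℝ} (h0 : 0 < t) (hπ : t < π) :
    Real.log (Real.sin t) = Real.log t + Real.log (sdeSinc t) := by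
  rw [sdeSinc_of_ne t (ne_of_gt h0), ← Real.log_mul (ne_of_gt h0)
    (ne_of_gt (div_pos (Real.sin_pos_of_pos_of_lt_pi h0 hπ) h0))]
  congr 1
  field_simp

lemma intervalIntegrable_log_sin1 {z : ℝ} (h0 : 0 ≤ z) (hπ : z < π) :
    IntervalIntegrable (fun t => Real.log (Real.sin t)) volume 0 z := by
  have hG : IntervalIntegrable (fun t => Real.log (sdeSinc t)) volume 0 z := by
    apply ContinuousOn.intervalIntegrable
    intro t ht
    rw [uIcc_of_le h0] at ht
    exact (Real.continuousAt_log (ne_of_gt (sdeSinc_pos ht.1 (lt_of_le_of_lt ht.2 hπ)))).comp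
      continuous_sdeSinc.continuousAt |>.continuousWithinAt
  have hsum := (intervalIntegrable_log0 h0).add hG
  rw [intervalIntegrable_iff_integrableOn_Ioc_of_le h0] at hsum ⊢
  apply hsum.congr_fun ?_ measurableSet_Ioc
  intro t ht
  exact (log_sin_eq ht.1 (lt_of_le_of_lt ht.2 hπ)).symm

lemma intervalIntegrable_log_sin_right : IntervalIntegrable (fun t => Real.log (Real.sin t)) volume (π/2) π := by
  have h := (intervalIntegrable_log_sin1 (by positivity) (by linarith [pi_pos])
    : IntervalIntegrable (fun t => Real.log (Real.sin t)) volume 0 (π/2))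
  have h2 := h.comp_sub_left π
  have he : (fun x => Real.log (Real.sin (π - x))) = fun t => Real.log (Real.sin t) := by
    funext x; rw [Real.sin_pi_sub]
  rw [he] at h2
  have h3 := h2.symm
  rw [show π - π/2 = π/2 by ring, show π - 0 = π by ring] at h3
  exact h3

lemma intervalIntegrable_log_sin_pi : IntervalIntegrable (fun t => Real.log (Real.sin t)) volume 0 π :=
  (intervalIntegrable_log_sin1 (by positivity) (by linarith [pi_pos])).trans
    intervalIntegrable_log_sin_right

lemma sde_intervalIntegrable_log_sin {z : ℝ} (h0 : 0 ≤ z) (hπ : z ≤ π) :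
    IntervalIntegrable (fun t => Real.log (Real.sin t)) volume 0 z :=
  intervalIntegrable_log_sin_pi.mono_set
    (by rw [uIcc_of_le h0, uIcc_of_le pi_pos.le]; exact Icc_subset_Icc le_rfl hπ)

lemma integral_log_sin_pi : ∫ t in (0:ℝ)..π, Real.log (Real.sin t) = -(π * Real.log 2) := by
  have hπ : (0:ℝ) < π := pi_pos
  set I := ∫ t in (0:ℝ)..π, Real.log (Real.sin t) with hI
  set J := ∫ t in (0:ℝ)..(π/2), Real.log (Real.sin t) with hJ
  have hcosJ : ∫ t in (0:ℝ)..(π/2), Real.log (Real.cos t) = J := by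
    have h1 : ∫ t in (0:ℝ)..(π/2), Real.log (Real.cos t)
        = ∫ t in (0:ℝ)..(π/2), Real.log (Real.sin (π/2 - t)) := by
      apply intervalIntegral.integral_congr
      intro t _; simp only [Real.sin_pi_div_two_sub]
    rw [h1, intervalIntegral.integral_comp_sub_left (fun t => Real.log (Real.sin t)) (π/2)]
    norm_num
    exact hJ.symm
  have hsplit : I = 2 * J := by
    have hr : ∫ t in (π/2)..π, Real.log (Real.sin t) = J := by
      have h1 : ∫ t in (π/2)..π, Real.log (Real.sin t)
          = ∫ t in (π/2)..π, Real.log (Real.sin (π - t)) := by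
        apply intervalIntegral.integral_congr
        intro t _; simp only [Real.sin_pi_sub]
      rw [h1, intervalIntegral.integral_comp_sub_left (fun t => Real.log (Real.sin t)) π]
      rw [show π - π/2 = π/2 by ring, show π - π = 0 by ring]
    have := intervalIntegral.integral_add_adjacent_intervals
      (intervalIntegrable_log_sin1 (by positivity) (by linarith))
      intervalIntegrable_log_sin_right
    rw [hr] at this
    rw [hI, ← this]; ring
  have hdouble : ∫ u in (0:ℝ)..(π/2), Real.log (Real.sin (2*u)) = I / 2 := by
    have := intervalIntegral.integral_comp_mul_left (a := (0:ℝ)) (b := π/2)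
      (fun t => Real.log (Real.sin t)) (c := (2:ℝ)) two_ne_zero
    rw [this]
    norm_num [hI]
    ring
  have hexpand : ∫ u in (0:ℝ)..(π/2), Real.log (Real.sin (2*u))
      = ∫ u in (0:ℝ)..(π/2), (Real.log 2 + Real.log (Real.sin u) + Real.log (Real.cos u)) := by
    apply intervalIntegral.integral_congr_ae
    have hne : ∀ᵐ u : ℝ, u ≠ π/2 := by
      filter_upwards [compl_mem_ae_iff.2 (volume_singleton (a := π/2))] with t ht
      simpa using ht
    filter_upwards [hne] with u hu hmem
    rw [Set.uIoc_of_le (by positivity : (0:ℝ) ≤ π/2)] at hmem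
    have hu0 : 0 < u := hmem.1
    have huπ : u < π/2 := lt_of_le_of_ne hmem.2 hu
    have hs : 0 < Real.sin u := Real.sin_pos_of_pos_of_lt_pi hu0 (by linarith)
    have hc : 0 < Real.cos u := Real.cos_pos_of_mem_Ioo ⟨by linarith, huπ⟩
    rw [Real.sin_two_mul, Real.log_mul (by positivity) (ne_of_gt hc),
      Real.log_mul (by norm_num) (ne_of_gt hs)]
  have hsum : ∫ u in (0:ℝ)..(π/2), (Real.log 2 + Real.log (Real.sin u) + Real.log (Real.cos u))
      = (π/2) * Real.log 2 + J + J := by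
    have hJint : IntervalIntegrable (fun t => Real.log (Real.sin t)) volume 0 (π/2) :=
      intervalIntegrable_log_sin1 (by positivity) (by linarith)
    have hCint : IntervalIntegrable (fun t => Real.log (Real.cos t)) volume 0 (π/2) := by
      have h2 := hJint.comp_sub_left (π/2)
      have he : (fun x => Real.log (Real.sin (π/2 - x))) = fun t => Real.log (Real.cos t) := by
        funext x; rw [Real.sin_pi_div_two_sub]
      rw [he] at h2
      norm_num at h2
      exact h2.symm
    rw [intervalIntegral.integral_add ((_root_.intervalIntegrable_const).add hJint) hCint,
      intervalIntegral.integral_add (_root_.intervalIntegrable_const) hJint]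
    rw [hcosJ, intervalIntegral.integral_const]
    simp
    exact hJ.symm

  have : I / 2 = (π/2) * Real.log 2 + 2 * J := by
    rw [← hdouble, hexpand, hsum]; ring
  rw [hsplit] at this ⊢
  have : J = -(π/2 * Real.log 2) := by linarith
  rw [this]; ring
open Real MeasureTheory intervalIntegral Filter Set Topology

noncomputable def SiR (x : ℝ) : ℝ := ∫ t in (0:ℝ)..x, Real.sin t / t
noncomputable def CinR (x : ℝ) : ℝ := ∫ t in (0:ℝ)..x, (1 - Real.cos t) / t
noncomputable def FR (z : ℝ) : ℝ := ∫ t in (0:ℝ)..z, Real.log (Real.sin t)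

noncomputable def AR (z : ℝ) : ℝ :=
  1 - Real.log (2*π)/2 - SiR (2*π)/(4*π) - CinR (2*z)/4 + Real.log z/2
    - 1/2 * Real.log (Real.sin z)
noncomputable def BR (z : ℝ) : ℝ :=
  z/2 * Real.log (2*π) - z/2 * Real.log z + z * SiR (2*π)/(4*π) - SiR (2*z)/4 + 1/2 * FR z
noncomputable def NR (z : ℝ) : ℝ := Real.sin z * AR z + Real.cos z * BR z
noncomputable def NDR (z : ℝ) : ℝ := -(Real.cos z * CinR (2*z))/4 - Real.sin z * BR z
noncomputable def BDR (z : ℝ) : ℝ :=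
  (1/2*Real.log (2*π)) - (1/2 * Real.log z + z/2 * z⁻¹) + 1*SiR (2*π)/(4*π)
    - sdeSinc (2*z)*2/4 + 1/2 * Real.log (Real.sin z)
noncomputable def NDDR (z : ℝ) : ℝ :=
  -((-Real.sin z * CinR (2*z)) + Real.cos z * ((1 - Real.cos (2*z))/(2*z)*2))/4
    - (Real.cos z * BR z + Real.sin z * BDR z)

lemma hasDerivAt_Cin2 {z : ℝ} :
    HasDerivAt (fun z : ℝ => CinR (2*z)) ((1 - Real.cos (2*z))/(2*z)*2) z := by
  have h := HasDerivAt.comp z (hasDerivAt_Cin (2*z)) ((hasDerivAt_id z).const_mul 2)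
  exact h.congr_deriv (by simp)

lemma hasDerivAt_Si2 {z : ℝ} :
    HasDerivAt (fun z : ℝ => SiR (2*z)) (sdeSinc (2*z)*2) z := by
  have h := HasDerivAt.comp z (hasDerivAt_Si (2*z)) ((hasDerivAt_id z).const_mul 2)
  exact h.congr_deriv (by simp [mul_comm])

lemma hasDerivAt_FR {z : ℝ} (h0 : 0 < z) (hπ : z < π) :
    HasDerivAt FR (Real.log (Real.sin z)) z := by
  apply intervalIntegral.integral_hasDerivAt_right
    (sde_intervalIntegrable_log_sin h0.le hπ.le)
    ((Real.measurable_log.comp Real.continuous_sin.measurable).stronglyMeasurable.stronglyMeasurableAtFilter)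
  exact (Real.continuousAt_log
    (ne_of_gt (Real.sin_pos_of_pos_of_lt_pi h0 hπ))).comp Real.continuous_sin.continuousAt

lemma hasDerivAt_logsin {z : ℝ} (hs : Real.sin z ≠ 0) :
    HasDerivAt (fun z : ℝ => Real.log (Real.sin z)) ((Real.sin z)⁻¹ * Real.cos z) z :=
  (Real.hasDerivAt_log hs).comp z (Real.hasDerivAt_sin z)

lemma hasDerivAt_AR {z : ℝ} (h0 : 0 < z) (hπ : z < π) :
    HasDerivAt AR (-((1 - Real.cos (2*z))/(2*z)*2)/4 + z⁻¹/2
      - 1/2 * ((Real.sin z)⁻¹ * Real.cos z)) z := by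
  have hs : Real.sin z ≠ 0 := ne_of_gt (Real.sin_pos_of_pos_of_lt_pi h0 hπ)
  exact ((((hasDerivAt_const z (1 - Real.log (2*π)/2 - SiR (2*π)/(4*π))).sub
    (hasDerivAt_Cin2.div_const 4)).add
    ((Real.hasDerivAt_log (ne_of_gt h0)).div_const 2)).sub
    ((hasDerivAt_logsin hs).const_mul (1/2))).congr_deriv (by ring)

lemma hasDerivAt_BR {z : ℝ} (h0 : 0 < z) (hπ : z < π) :
    HasDerivAt BR (BDR z) z := by
  have h1 : HasDerivAt (fun z : ℝ => z/2 * Real.log (2*π)) (1/2*Real.log (2*π)) z := by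
    simpa using ((hasDerivAt_id z).div_const 2).mul_const (Real.log (2*π))
  have h2 : HasDerivAt (fun z : ℝ => z/2 * Real.log z) (1/2 * Real.log z + z/2 * z⁻¹) z :=
    ((hasDerivAt_id z).div_const 2).mul (Real.hasDerivAt_log (ne_of_gt h0))
  have h3 : HasDerivAt (fun z : ℝ => z * SiR (2*π)/(4*π)) (1*SiR (2*π)/(4*π)) z :=
    ((hasDerivAt_id z).mul_const (SiR (2*π))).div_const (4*π)
  exact ((((h1.sub h2).add h3).sub (hasDerivAt_Si2.div_const 4)).add
    ((hasDerivAt_FR h0 hπ).const_mul (1/2)))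

lemma hasDerivAt_NR {z : ℝ} (h0 : 0 < z) (hπ : z < π) :
    HasDerivAt NR (NDR z) z := by
  have hs : Real.sin z ≠ 0 := ne_of_gt (Real.sin_pos_of_pos_of_lt_pi h0 hπ)
  have h := ((Real.hasDerivAt_sin z).mul (hasDerivAt_AR h0 hπ)).add
    ((Real.hasDerivAt_cos z).mul (hasDerivAt_BR h0 hπ))
  refine h.congr_deriv (Eq.symm ?_)
  unfold NDR AR BDR
  rw [sdeSinc_of_ne _ (by positivity), Real.sin_two_mul, Real.cos_two_mul']
  have hpy := Real.sin_sq_add_cos_sq z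
  field_simp
  linear_combination (2 * Real.sin z * π) * hpy

lemma hasDerivAt_NDR {z : ℝ} (h0 : 0 < z) (hπ : z < π) :
    HasDerivAt NDR (NDDR z) z := by
  exact ((((Real.hasDerivAt_cos z).mul hasDerivAt_Cin2).neg.div_const 4).sub
    ((Real.hasDerivAt_sin z).mul (hasDerivAt_BR h0 hπ)))
noncomputable def GIR (z : ℝ) : ℝ := ∫ t in (0:ℝ)..z, Real.log (sdeSinc t)

lemma SiR_zero : SiR 0 = 0 := intervalIntegral.integral_same
lemma CinR_zero : CinR 0 = 0 := intervalIntegral.integral_same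
lemma GIR_zero : GIR 0 = 0 := intervalIntegral.integral_same

lemma tendsto_slope_zero {F : ℝ → ℝ} {d : ℝ} (h : HasDerivAt F d 0) (h0 : F 0 = 0) :
    Tendsto (fun z => F z / z) (𝓝[>](0:ℝ)) (𝓝 d) := by
  rw [hasDerivAt_iff_tendsto_slope] at h
  have h2 := h.mono_left (nhdsWithin_mono 0 (fun x hx => ne_of_gt hx : Ioi (0:ℝ) ⊆ {(0:ℝ)}ᶜ))
  refine h2.congr fun z => ?_
  simp [slope_def_field, h0]

lemma tendsto_two_mul_pos : Tendsto (fun z : ℝ => 2*z) (𝓝[>](0:ℝ)) (𝓝[>](0:ℝ)) := by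
  rw [tendsto_nhdsWithin_iff]
  constructor
  · have := (continuous_const.mul continuous_id : Continuous fun z : ℝ => (2:ℝ)*z).tendsto 0
    have h' : Tendsto (fun z : ℝ => (2:ℝ)*z) (𝓝[>] 0) (𝓝 (2*0)) := this.mono_left nhdsWithin_le_nhds
    simpa using h'
  · filter_upwards [self_mem_nhdsWithin] with z hz
    have : (0:ℝ) < z := hz
    exact mul_pos two_pos this

lemma tendsto_SiR2 : Tendsto (fun z : ℝ => SiR (2*z)/(2*z)) (𝓝[>](0:ℝ)) (𝓝 1) := by
  have h1 : Tendsto (fun w : ℝ => SiR w / w) (𝓝[>](0:ℝ)) (𝓝 1) := by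
    have := tendsto_slope_zero ((hasDerivAt_Si 0).congr_deriv (show sdeSinc 0 = 1 by simp [sdeSinc])) SiR_zero
    simpa [SiR] using this
  exact h1.comp tendsto_two_mul_pos

lemma tendsto_CinR2 : Tendsto (fun z : ℝ => CinR (2*z)/(2*z)) (𝓝[>](0:ℝ)) (𝓝 0) := by
  have h1 : Tendsto (fun w : ℝ => CinR w / w) (𝓝[>](0:ℝ)) (𝓝 0) := by
    have := tendsto_slope_zero ((hasDerivAt_Cin 0).congr_deriv (show (1 - Real.cos 0)/0 = 0 by simp)) CinR_zero
    simpa [CinR] using this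
  exact h1.comp tendsto_two_mul_pos

lemma continuous_log_sdeSinc_at0 : ContinuousAt (fun t : ℝ => Real.log (sdeSinc t)) 0 := by
  have h1 : sdeSinc 0 ≠ 0 := by simp [sdeSinc]
  exact (Real.continuousAt_log h1).comp continuous_sdeSinc.continuousAt

lemma tendsto_GIR : Tendsto (fun z : ℝ => GIR z / z) (𝓝[>](0:ℝ)) (𝓝 0) := by
  have h : HasDerivAt GIR (Real.log (sdeSinc 0)) 0 := by
    apply intervalIntegral.integral_hasDerivAt_right
      (by simp : IntervalIntegrable (fun t => Real.log (sdeSinc t)) volume 0 0)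
      ((Real.measurable_log.comp continuous_sdeSinc.measurable).stronglyMeasurable.stronglyMeasurableAtFilter)
      continuous_log_sdeSinc_at0
  have := tendsto_slope_zero (h.congr_deriv (show Real.log (sdeSinc 0) = 0 by simp [sdeSinc])) GIR_zero
  exact this

lemma tendsto_sinc0 : Tendsto (fun z : ℝ => Real.sin z / z) (𝓝[>](0:ℝ)) (𝓝 1) := by
  have h := (continuous_sdeSinc.tendsto 0).mono_left (nhdsWithin_le_nhds (s := Ioi (0:ℝ)))
  rw [show sdeSinc 0 = 1 by simp [sdeSinc]] at h
  refine h.congr' ?_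
  filter_upwards [self_mem_nhdsWithin] with z hz
  exact sdeSinc_of_ne z (ne_of_gt hz)

lemma FR_eq {z : ℝ} (h0 : 0 < z) (hπ : z < π) :
    FR z = z * Real.log z - z + GIR z := by
  have heq : ∀ t ∈ uIcc (0:ℝ) z, Real.log (Real.sin t) = Real.log t + Real.log (sdeSinc t) := by
    intro t ht
    rw [uIcc_of_le h0.le] at ht
    rcases eq_or_lt_of_le ht.1 with rfl | h0t
    · simp [sdeSinc]
    · exact log_sin_eq h0t (lt_of_le_of_lt ht.2 hπ)
  have hGint : IntervalIntegrable (fun t => Real.log (sdeSinc t)) volume 0 z := by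
    apply ContinuousOn.intervalIntegrable
    intro t ht
    rw [uIcc_of_le h0.le] at ht
    exact ((Real.continuousAt_log (ne_of_gt (sdeSinc_pos ht.1 (lt_of_le_of_lt ht.2 hπ)))).comp
      continuous_sdeSinc.continuousAt).continuousWithinAt
  calc FR z = ∫ t in (0:ℝ)..z, (Real.log t + Real.log (sdeSinc t)) :=
        intervalIntegral.integral_congr heq
    _ = (∫ t in (0:ℝ)..z, Real.log t) + ∫ t in (0:ℝ)..z, Real.log (sdeSinc t) :=
        intervalIntegral.integral_add (intervalIntegrable_log0 h0.le) hGint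
    _ = z * Real.log z - z + GIR z := by rw [integral_log0 h0, GIR]

lemma tendsto_AR0 :
    Tendsto AR (𝓝[>](0:ℝ)) (𝓝 (1 - Real.log (2*π)/2 - SiR (2*π)/(4*π))) := by
  have hCin : Tendsto (fun z : ℝ => CinR (2*z)) (𝓝[>](0:ℝ)) (𝓝 0) := by
    have hc : ContinuousAt (fun z : ℝ => CinR (2*z)) 0 :=
      (hasDerivAt_Cin (2*0)).continuousAt.comp ((continuous_const.mul continuous_id).continuousAt)
    have := hc.tendsto.mono_left (nhdsWithin_le_nhds (s := Ioi (0:ℝ)))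
    simpa [CinR_zero] using this
  have hG : Tendsto (fun z : ℝ => Real.log (sdeSinc z)) (𝓝[>](0:ℝ)) (𝓝 0) := by
    have := continuous_log_sdeSinc_at0.tendsto.mono_left (nhdsWithin_le_nhds (s := Ioi (0:ℝ)))
    simpa [sdeSinc] using this
  have h := ((tendsto_const_nhds (x := 1 - Real.log (2*π)/2 - SiR (2*π)/(4*π))).sub
    (hCin.div_const 4)).sub (hG.const_mul (1/2))
  have h2 : Tendsto AR (𝓝[>](0:ℝ))
      (𝓝 ((1 - Real.log (2*π)/2 - SiR (2*π)/(4*π)) - 0/4 - 1/2*0)) := by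
    refine h.congr' ?_
    filter_upwards [Ioo_mem_nhdsGT_of_mem (Set.left_mem_Ico.2 Real.pi_pos)] with z hz
    have hz0 : (0:ℝ) < z := hz.1
    unfold AR
    rw [sdeSinc_of_ne z (ne_of_gt hz0),
      Real.log_div (ne_of_gt (Real.sin_pos_of_pos_of_lt_pi hz0 hz.2)) (ne_of_gt hz0)]
    ring
  simpa using h2

lemma tendsto_BRdiv0 :
    Tendsto (fun z => BR z / z) (𝓝[>](0:ℝ))
      (𝓝 (Real.log (2*π)/2 + SiR (2*π)/(4*π) - 1)) := by
  have h := (((tendsto_const_nhds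
      (x := Real.log (2*π)/2 + SiR (2*π)/(4*π) - 1/2)).sub
    (tendsto_SiR2.div_const 2)).add (tendsto_GIR.div_const 2))
  have h2 : Tendsto (fun z => BR z / z) (𝓝[>](0:ℝ))
      (𝓝 ((Real.log (2*π)/2 + SiR (2*π)/(4*π) - 1/2) - 1/2 + 0/2)) := by
    refine h.congr' ?_
    filter_upwards [Ioo_mem_nhdsGT_of_mem (Set.left_mem_Ico.2 Real.pi_pos)] with z hz
    have hz0 : z ≠ 0 := ne_of_gt hz.1
    unfold BR
    rw [FR_eq hz.1 hz.2]
    field_simp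
    ring
  convert h2 using 2
  ring

lemma tendsto_BR0 : Tendsto BR (𝓝[>](0:ℝ)) (𝓝 0) := by
  have hid : Tendsto (fun z : ℝ => z) (𝓝[>](0:ℝ)) (𝓝 0) := by
    have := (continuous_id.tendsto (0:ℝ)).mono_left (nhdsWithin_le_nhds (s := Ioi (0:ℝ)))
    exact this
  have h2 : Tendsto (fun z : ℝ => z * (BR z / z)) (𝓝[>](0:ℝ))
      (𝓝 (0 * (Real.log (2*π)/2 + SiR (2*π)/(4*π) - 1))) := hid.mul tendsto_BRdiv0
  rw [zero_mul] at h2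
  refine h2.congr' ?_
  filter_upwards [self_mem_nhdsWithin] with z hz
  have hz0 : z ≠ 0 := ne_of_gt (show (0:ℝ) < z from hz)
  field_simp

lemma tendsto_sin0 : Tendsto Real.sin (𝓝[>](0:ℝ)) (𝓝 0) := by
  have := Real.continuous_sin.tendsto 0
  simpa using this.mono_left nhdsWithin_le_nhds

lemma tendsto_cos0 : Tendsto Real.cos (𝓝[>](0:ℝ)) (𝓝 1) := by
  have := Real.continuous_cos.tendsto 0
  simpa using this.mono_left nhdsWithin_le_nhds

lemma tendsto_NR0 : Tendsto NR (𝓝[>](0:ℝ)) (𝓝 0) := by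
  have h := (tendsto_sin0.mul tendsto_AR0).add (tendsto_cos0.mul tendsto_BR0)
  have h2 : Tendsto NR (𝓝[>](0:ℝ))
      (𝓝 (0 * (1 - Real.log (2*π)/2 - SiR (2*π)/(4*π)) + 1 * 0)) := h
  simpa using h2

lemma tendsto_NDRdiv0 : Tendsto (fun z => NDR z / z) (𝓝[>](0:ℝ)) (𝓝 0) := by
  have h := ((tendsto_cos0.mul (tendsto_CinR2.div_const 2)).neg).sub
    (tendsto_sin0.mul tendsto_BRdiv0)
  have h2 : Tendsto (fun z => NDR z / z) (𝓝[>](0:ℝ))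
      (𝓝 (-(1 * (0/2)) - 0 * (Real.log (2*π)/2 + SiR (2*π)/(4*π) - 1))) := by
    refine h.congr' ?_
    filter_upwards [self_mem_nhdsWithin] with z hz
    have hz0 : z ≠ 0 := ne_of_gt (show (0:ℝ) < z from hz)
    unfold NDR
    field_simp
    ring
  simpa using h2

lemma tendsto_NRdiv2 : Tendsto (fun z => NR z / z^2) (𝓝[>](0:ℝ)) (𝓝 0) := by
  apply HasDerivAt.lhopital_zero_right_on_Ioo (a := 0) (b := π) Real.pi_pos
    (f' := NDR) (g' := fun z => 2*z)
  · exact fun x hx => hasDerivAt_NR hx.1 hx.2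
  · exact fun x hx => (hasDerivAt_pow 2 x).congr_deriv (by push_cast; ring)
  · exact fun x hx => by have h := hx.1; exact ne_of_gt (by linarith)
  · exact tendsto_NR0
  · have := ((continuous_pow 2).tendsto (0:ℝ)).mono_left (nhdsWithin_le_nhds (s := Ioi (0:ℝ)))
    simpa using this
  · have h2 : Tendsto (fun z => (NDR z / z)/2) (𝓝[>](0:ℝ)) (𝓝 (0/2)) :=
      tendsto_NDRdiv0.div_const 2
    rw [zero_div] at h2
    refine h2.congr' ?_
    filter_upwards [self_mem_nhdsWithin] with z hz
    rw [div_div, mul_comm z 2]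

lemma FR_pi : FR π = -(π * Real.log 2) := integral_log_sin_pi

lemma tendsto_FR_pi : Tendsto FR (𝓝[<] π) (𝓝 (-(π * Real.log 2))) := by
  have hint : IntegrableOn (fun t => Real.log (Real.sin t)) (uIcc (0:ℝ) π) volume := by
    rw [uIcc_of_le Real.pi_pos.le]
    exact (intervalIntegrable_iff_integrableOn_Icc_of_le Real.pi_pos.le).1
      intervalIntegrable_log_sin_pi
  have hc := intervalIntegral.continuousOn_primitive_interval hint
  have hmem : π ∈ uIcc (0:ℝ) π := by
    rw [uIcc_of_le Real.pi_pos.le]; exact ⟨Real.pi_pos.le, le_refl _⟩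
  have h2 : Tendsto FR (𝓝[uIcc (0:ℝ) π] π) (𝓝 (FR π)) := (hc π hmem).tendsto
  rw [FR_pi] at h2
  refine h2.mono_left ?_
  rw [← nhdsWithin_Ioo_eq_nhdsLT Real.pi_pos]
  apply nhdsWithin_mono
  rw [uIcc_of_le Real.pi_pos.le]
  exact Ioo_subset_Icc_self

lemma tendsto_BR_pi : Tendsto BR (𝓝[<] π) (𝓝 0) := by
  have hSi : ContinuousAt (fun z : ℝ => SiR (2*z)) π :=
    (hasDerivAt_Si (2*π)).continuousAt.comp
      ((continuous_const.mul continuous_id : Continuous fun z : ℝ => (2:ℝ)*z).continuousAt)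
  have h1 : Tendsto (fun z : ℝ => z/2 * Real.log (2*π) - z/2 * Real.log z
      + z * SiR (2*π)/(4*π) - SiR (2*z)/4) (𝓝 π)
      (𝓝 (π/2 * Real.log (2*π) - π/2 * Real.log π + π * SiR (2*π)/(4*π) - SiR (2*π)/4)) := by
    have hlog : ContinuousAt Real.log π := Real.continuousAt_log (ne_of_gt Real.pi_pos)
    have : ContinuousAt (fun z : ℝ => z/2 * Real.log (2*π) - z/2 * Real.log z
        + z * SiR (2*π)/(4*π) - SiR (2*z)/4) π := by
      apply ContinuousAt.sub
      apply ContinuousAt.add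
      apply ContinuousAt.sub
      · exact ((continuous_id.div_const 2).continuousAt).mul continuousAt_const
      · exact ((continuous_id.div_const 2).continuousAt).mul hlog
      · exact ((continuous_id.mul continuous_const).div_const (4*π)).continuousAt
      · exact hSi.div_const 4
    have h2 := this.tendsto
    rw [show (2:ℝ)*π = 2*π from rfl] at h2
    exact h2
  have h := (h1.mono_left nhdsWithin_le_nhds).add (tendsto_FR_pi.const_mul (1/2))
  have hval : (π/2 * Real.log (2*π) - π/2 * Real.log π + π * SiR (2*π)/(4*π) - SiR (2*π)/4)
      + 1/2 * (-(π * Real.log 2)) = 0 := by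
    rw [Real.log_mul two_ne_zero (ne_of_gt Real.pi_pos)]
    field_simp
    ring
  rw [hval] at h
  exact h

lemma tendsto_NR_pi : Tendsto NR (𝓝[<] π) (𝓝 0) := by
  have hCin : ContinuousAt (fun z : ℝ => CinR (2*z)) π :=
    (hasDerivAt_Cin (2*π)).continuousAt.comp
      ((continuous_const.mul continuous_id : Continuous fun z : ℝ => (2:ℝ)*z).continuousAt)
  have hsinA : Tendsto (fun z => Real.sin z * AR z) (𝓝[<] π) (𝓝 0) := by
    have h1 : Tendsto (fun z : ℝ => Real.sin z * (1 - Real.log (2*π)/2 - SiR (2*π)/(4*π)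
        - CinR (2*z)/4 + Real.log z/2)) (𝓝 π)
        (𝓝 (Real.sin π * (1 - Real.log (2*π)/2 - SiR (2*π)/(4*π)
        - CinR (2*π)/4 + Real.log π/2))) := by
      apply ContinuousAt.tendsto
      apply Real.continuous_sin.continuousAt.mul
      apply ContinuousAt.add
      · exact (continuousAt_const.sub (hCin.div_const 4))
      · exact (Real.continuousAt_log (ne_of_gt Real.pi_pos)).div_const 2
    have h2 : Tendsto (fun z : ℝ => Real.sin z * Real.log (Real.sin z)) (𝓝 π) (𝓝 0) := by
      have := (Real.continuous_mul_log.comp Real.continuous_sin).tendsto π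
      simpa [Real.sin_pi, Function.comp_def] using this
    have h3 := (h1.sub (h2.const_mul (1/2))).mono_left (nhdsWithin_le_nhds (s := Iio π))
    rw [Real.sin_pi] at h3
    have h4 : Tendsto (fun z : ℝ => Real.sin z * (1 - Real.log (2*π)/2 - SiR (2*π)/(4*π)
        - CinR (2*z)/4 + Real.log z/2) - 1/2 * (Real.sin z * Real.log (Real.sin z)))
        (𝓝[<] π) (𝓝 0) := by simpa using h3
    refine h4.congr fun z => ?_
    unfold AR
    ring
  have hcosB : Tendsto (fun z => Real.cos z * BR z) (𝓝[<] π) (𝓝 0) := by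
    have h := (Real.continuous_cos.tendsto π).mono_left (nhdsWithin_le_nhds (s := Iio π))
    have h2 := h.mul tendsto_BR_pi
    simpa using h2
  have := hsinA.add hcosB
  rw [add_zero] at this; exact this

lemma tendsto_TH_pi : Tendsto (fun z => NR z / z) (𝓝[<] π) (𝓝 0) := by
  have hid : Tendsto (fun z : ℝ => z) (𝓝[<] π) (𝓝 π) :=
    (continuous_id.tendsto π).mono_left nhdsWithin_le_nhds
  have := tendsto_NR_pi.div hid (ne_of_gt Real.pi_pos)
  rw [zero_div] at this; exact this

/-- First-order scaled delta expansion solution at `n = 1`: the explicit function `Θ₁⁽¹⁾`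
satisfies `Θ₁⁽¹⁾'' + (2/z)·Θ₁⁽¹⁾' + Θ₁⁽¹⁾ = −(sin z / z)·[ln S₁⁽⁰⁾ + ln(sin z / z)]`
on `(0, π)`, where `S₁⁽⁰⁾ = 2π·exp(Si(2π)/(2π) − 3/2)`; moreover `Θ₁⁽¹⁾(z) → 0` and
`Θ₁⁽¹⁾'(z) → 0` as `z → 0⁺`, and `Θ₁⁽¹⁾(z) → 0` as `z → π⁻`. -/
theorem scaled_delta_expansion_first_order_n1 :
    let Si : ℝ → ℝ := fun x => ∫ t in (0 : ℝ)..x, Real.sin t / t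
    let Cin : ℝ → ℝ := fun x => ∫ t in (0 : ℝ)..x, (1 - Real.cos t) / t
    let S10 : ℝ := 2 * Real.pi * Real.exp (Si (2 * Real.pi) / (2 * Real.pi) - 3 / 2)
    let Θ : ℝ → ℝ := fun z =>
      Real.sin z / z *
          (1 - Real.log (2 * Real.pi) / 2 - Si (2 * Real.pi) / (4 * Real.pi)
            - Cin (2 * z) / 4 + Real.log z / 2 - 1 / 2 * Real.log (Real.sin z))
        + Real.cos z / z *
          (z / 2 * Real.log (2 * Real.pi) - z / 2 * Real.log z
            + z * Si (2 * Real.pi) / (4 * Real.pi) - Si (2 * z) / 4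
            + 1 / 2 * ∫ t in (0 : ℝ)..z, Real.log (Real.sin t))
    (∀ z ∈ Set.Ioo (0 : ℝ) Real.pi,
      deriv (deriv Θ) z + 2 / z * deriv Θ z + Θ z =
        -(Real.sin z / z) * (Real.log S10 + Real.log (Real.sin z / z))) ∧
    Filter.Tendsto Θ (nhdsWithin 0 (Set.Ioi 0)) (nhds 0) ∧
    Filter.Tendsto (deriv Θ) (nhdsWithin 0 (Set.Ioi 0)) (nhds 0) ∧
    Filter.Tendsto Θ (nhdsWithin Real.pi (Set.Iio Real.pi)) (nhds 0) := by
  intro Si Cin S10 Θ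
  have hΘ1 : Θ = fun z => Real.sin z / z * AR z + Real.cos z / z * BR z := rfl
  have hΘ : Θ = fun z => NR z / z := by
    rw [hΘ1]; funext z; simp only [NR]; ring
  have hS10 : Real.log S10 = Real.log (2*π) + SiR (2*π)/(2*π) - 3/2 := by
    show Real.log (2 * π * Real.exp (SiR (2*π) / (2*π) - 3/2)) = _
    rw [Real.log_mul (by positivity) (Real.exp_ne_zero _), Real.log_exp]
    ring
  -- derivative description on Ioo 0 π
  have hTd : ∀ w ∈ Set.Ioo (0:ℝ) π, HasDerivAt Θ ((NDR w * w - NR w * 1)/w^2) w := by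
    intro w hw
    rw [hΘ]
    exact (hasDerivAt_NR hw.1 hw.2).div (hasDerivAt_id w) (ne_of_gt hw.1)
  have hDΘ : ∀ w ∈ Set.Ioo (0:ℝ) π, deriv Θ w = (NDR w * w - NR w * 1)/w^2 :=
    fun w hw => (hTd w hw).deriv
  refine ⟨?_, ?_, ?_, ?_⟩
  · -- the ODE
    intro z hz
    obtain ⟨h0, hπ⟩ := hz
    have hz0 : z ≠ 0 := ne_of_gt h0
    have hsin : 0 < Real.sin z := Real.sin_pos_of_pos_of_lt_pi h0 hπ
    have hEv : deriv Θ =ᶠ[𝓝 z] (fun w => (NDR w * w - NR w * 1)/w^2) := by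
      filter_upwards [isOpen_Ioo.mem_nhds ⟨h0, hπ⟩] with w hw
      exact hDΘ w hw
    have h2 : HasDerivAt (fun w => (NDR w * w - NR w * 1)/w^2)
        (((NDDR z * z + NDR z * 1 - NDR z * 1) * z^2 - (NDR z * z - NR z * 1) * ((2:ℕ) * z^(2-1))) / (z^2)^2) z :=
      (((hasDerivAt_NDR h0 hπ).mul (hasDerivAt_id z)).sub
        ((hasDerivAt_NR h0 hπ).mul_const 1)).div (hasDerivAt_pow 2 z) (pow_ne_zero 2 hz0)
    rw [hEv.deriv_eq, h2.deriv, hDΘ z ⟨h0, hπ⟩, hΘ, hS10,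
      Real.log_div (ne_of_gt hsin) hz0]
    simp only [NDDR, NDR, NR, AR, BDR]
    rw [sdeSinc_of_ne _ (by positivity : (2*z) ≠ 0), Real.sin_two_mul, Real.cos_two_mul']
    have hpy := Real.sin_sq_add_cos_sq z
    norm_num
    field_simp
    linear_combination (2 * Real.cos z * z * π) * hpy
  · rw [hΘ]
    have h := (tendsto_sinc0.mul tendsto_AR0).add (tendsto_cos0.mul tendsto_BRdiv0)
    have h2 : Tendsto (fun z => NR z / z) (𝓝[>](0:ℝ))
        (𝓝 (1 * (1 - Real.log (2*π)/2 - SiR (2*π)/(4*π))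
          + 1 * (Real.log (2*π)/2 + SiR (2*π)/(4*π) - 1))) := by
      refine h.congr fun z => ?_
      simp only [NR]
      ring
    have : (1:ℝ) * (1 - Real.log (2*π)/2 - SiR (2*π)/(4*π))
        + 1 * (Real.log (2*π)/2 + SiR (2*π)/(4*π) - 1) = 0 := by ring
    rwa [this] at h2
  · have hEv : deriv Θ =ᶠ[𝓝[>](0:ℝ)] (fun w => (NDR w * w - NR w * 1)/w^2) := by
      filter_upwards [Ioo_mem_nhdsGT_of_mem (Set.left_mem_Ico.2 Real.pi_pos)] with w hw
      exact hDΘ w hw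
    rw [Filter.tendsto_congr' hEv]
    have h := tendsto_NDRdiv0.sub tendsto_NRdiv2
    rw [sub_zero] at h
    refine h.congr' ?_
    filter_upwards [self_mem_nhdsWithin] with z hz
    have hz0 : z ≠ 0 := ne_of_gt (show (0:ℝ) < z from hz)
    field_simp
  · rw [hΘ]
    exact tendsto_TH_pi
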